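/- Robust self-training never increases standard error in noiseless linear regression: let Σ ∈ ℝ^{d×d} be symmetric positive semidefinite, θ⋆ ∈ ℝ^d, X_std ∈ ℝ^{n×d} with y_std = X_std θ⋆, and X_ext ∈ ℝ^{m×d} with X_ext θ⋆ = 0. Let θ_int be ANY interpolant of the standard data (X_std θ_int = y_std), and let θ̂_rst be any minimizer of (θ − θ_int)ᵀ Σ (θ − θ_int) over the set {θ : X_std θ = y_std and X_ext θ = 0}. Then (θ̂_rst − θ⋆)ᵀ Σ (θ̂_rst − θ⋆) ≤ (θ_int − θ⋆)ᵀ Σ (θ_int − θ⋆), i.e. L_std(θ̂_rst) ≤ L_std(θ_int). -/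

import Mathlib

open Matrix BigOperators

/-- Standard (population) error of `θ` w.r.t. covariance `S` and true parameter `θstar`:
`(θ − θ⋆)ᵀ Σ (θ − θ⋆)`. -/
def Lstd {d : ℕ} (S : Matrix (Fin d) (Fin d) ℝ) (θstar θ : Fin d → ℝ) : ℝ :=
  (θ - θstar) ⬝ᵥ S.mulVec (θ - θstar)

/-- `θ` is the minimum Euclidean-norm solution of the constraint `C`. -/
def IsMinNormInterp {d : ℕ} (C : (Fin d → ℝ) → Prop) (θ : Fin d → ℝ) : Prop :=
  C θ ∧ ∀ θ', C θ' → θ ⬝ᵥ θ ≤ θ' ⬝ᵥ θ'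

/-- `P` is the orthogonal projection matrix onto `Null(X)`:
symmetric, idempotent, range contained in `Null(X)`, and fixing `Null(X)`. -/
def IsOrthProjNull {n d : ℕ} (X : Matrix (Fin n) (Fin d) ℝ)
    (P : Matrix (Fin d) (Fin d) ℝ) : Prop :=
  Pᵀ = P ∧ P * P = P ∧ (∀ v, X.mulVec (P.mulVec v) = 0) ∧
    (∀ v, X.mulVec v = 0 → P.mulVec v = v)

/-- `P` is the orthogonal projection matrix onto `Null(X1) ∩ Null(X2)`. -/
def IsOrthProjNull2 {n m d : ℕ} (X1 : Matrix (Fin n) (Fin d) ℝ)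
    (X2 : Matrix (Fin m) (Fin d) ℝ) (P : Matrix (Fin d) (Fin d) ℝ) : Prop :=
  Pᵀ = P ∧ P * P = P ∧ (∀ v, X1.mulVec (P.mulVec v) = 0 ∧ X2.mulVec (P.mulVec v) = 0) ∧
    (∀ v, X1.mulVec v = 0 → X2.mulVec v = 0 → P.mulVec v = v)

/-- Theorem linear-x, standard-error part (paper): the robust self-training estimator,
which minimizes the `Σ`-weighted distance to any standard interpolant subject to
interpolating the standard data and being invariant to the perturbation directions,
never has larger standard error than that interpolant. -/
theorem rst_no_standard_error_increase {n m d : ℕ}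
    (Xstd : Matrix (Fin n) (Fin d) ℝ) (Xext : Matrix (Fin m) (Fin d) ℝ)
    (S : Matrix (Fin d) (Fin d) ℝ) (hS : S.PosSemidef)
    (θstar : Fin d → ℝ) (hext : Xext.mulVec θstar = 0)
    (θint : Fin d → ℝ) (hint : Xstd.mulVec θint = Xstd.mulVec θstar)
    (θrst : Fin d → ℝ)
    (hrst1 : Xstd.mulVec θrst = Xstd.mulVec θstar)
    (hrst2 : Xext.mulVec θrst = 0)
    (hmin : ∀ θ : Fin d → ℝ, Xstd.mulVec θ = Xstd.mulVec θstar → Xext.mulVec θ = 0 →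
      (θrst - θint) ⬝ᵥ S.mulVec (θrst - θint) ≤ (θ - θint) ⬝ᵥ S.mulVec (θ - θint)) :
    Lstd S θstar θrst ≤ Lstd S θstar θint := by
  have hsymS : Sᵀ = S := hS.1
  have symm : ∀ u v : Fin d → ℝ, u ⬝ᵥ S.mulVec v = v ⬝ᵥ S.mulVec u := by
    intro u v
    rw [Matrix.dotProduct_mulVec, ← Matrix.mulVec_transpose, hsymS,
      dotProduct_comm]
  set a := θrst - θint with ha
  set b := θstar - θrst with hb
  have hqa : 0 ≤ a ⬝ᵥ S.mulVec a := by simpa using hS.dotProduct_mulVec_nonneg a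
  have hqb : 0 ≤ b ⬝ᵥ S.mulVec b := by simpa using hS.dotProduct_mulVec_nonneg b
  set c := a ⬝ᵥ S.mulVec b with hc
  set q := b ⬝ᵥ S.mulVec b with hq
  -- first-order condition along feasible direction b
  have key : ∀ t : ℝ, 0 ≤ 2 * t * c + t ^ 2 * q := by
    intro t
    have hfeas1 : Xstd.mulVec (θrst + t • b) = Xstd.mulVec θstar := by
      rw [Matrix.mulVec_add, Matrix.mulVec_smul, hb, Matrix.mulVec_sub, hrst1]
      simp
    have hfeas2 : Xext.mulVec (θrst + t • b) = 0 := by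
      rw [Matrix.mulVec_add, Matrix.mulVec_smul, hb, Matrix.mulVec_sub, hrst2,
        hext]
      simp
    have h := hmin (θrst + t • b) hfeas1 hfeas2
    have hrw : θrst + t • b - θint = a + t • b := by
      rw [ha]; abel
    rw [hrw] at h
    have hexp : (a + t • b) ⬝ᵥ S.mulVec (a + t • b)
        = a ⬝ᵥ S.mulVec a + 2 * t * c + t ^ 2 * q := by
      simp only [Matrix.mulVec_add, Matrix.mulVec_smul, add_dotProduct,
        dotProduct_add, dotProduct_smul, smul_dotProduct,
        smul_eq_mul]
      rw [symm b a, hc, hq]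
      ring
    rw [hexp] at h
    linarith
  -- deduce c = 0
  have hc0 : c = 0 := by
    have h1 := key (-c / (q + 1))
    have hq1 : 0 < q + 1 := by linarith
    have : 2 * (-c / (q + 1)) * c + (-c / (q + 1)) ^ 2 * q
        = -(c ^ 2 * (q + 2)) / (q + 1) ^ 2 := by
      field_simp
      ring
    rw [this] at h1
    have h2 : c ^ 2 * (q + 2) ≤ 0 := by
      have hpos : (0:ℝ) < (q + 1) ^ 2 := by positivity
      have := (le_div_iff₀ hpos).mp h1
      linarith
    have h3 : 0 < q + 2 := by linarith
    nlinarith [sq_nonneg c]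
  -- expand Lstd
  have hint' : θint - θstar = -(a + b) := by rw [ha, hb]; abel
  have hrst' : θrst - θstar = -b := by rw [hb]; abel
  unfold Lstd
  rw [hint', hrst']
  have e1 : (-(a + b)) ⬝ᵥ S.mulVec (-(a + b))
      = a ⬝ᵥ S.mulVec a + 2 * c + q := by
    simp only [Matrix.mulVec_neg, dotProduct_neg, neg_dotProduct,
      neg_neg, Matrix.mulVec_add, add_dotProduct, dotProduct_add]
    rw [symm b a, hc, hq]
    ring
  have e2 : (-b) ⬝ᵥ S.mulVec (-b) = q := by
    rw [Matrix.mulVec_neg, dotProduct_neg, neg_dotProduct, neg_neg, hq]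
  rw [e1, e2, hc0]
  linarith
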